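/- Let a = (a_l)_{l∈ℤ} be a finitely supported real mask with ∑_{j∈ℤ} a_{2j} = ∑_{j∈ℤ} a_{2j+1} = 1, and let q = (q_j)_{j∈ℤ} be the (unique) finitely supported sequence whose Laurent polynomial satisfies ∑_j a_j z^{−j} = (1+z) ∑_j q_j z^{−j}. If max( ∑_{j∈ℤ} |q_{2j}| , ∑_{j∈ℤ} |q_{2j−1}| ) < 1, then the subdivision scheme S_a is uniformly convergent. -/

import Mathlib

/-- The binary subdivision operator with mask `a`:
`(S_a f) m = ∑_l a (2l - m) * f l`, i.e. `(S_a f)_{2j+i} = ∑_l a_{2l-i} f_{j+l}`. -/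
noncomputable def subOp (a : ℤ → ℝ) (f : ℤ → ℝ) : ℤ → ℝ :=
  fun m => ∑ᶠ l : ℤ, a (2 * l - m) * f l

/-- A bounded real sequence indexed by `ℤ`. -/
def IsBoundedSeq (f : ℤ → ℝ) : Prop := ∃ M : ℝ, ∀ j : ℤ, |f j| ≤ M

/-- `S^k f⁰` converges uniformly to the continuous function `F`, in the sense
`lim_{k→∞} sup_{j∈ℤ} |(S^k f⁰)_j − F(2^{−k} j)| = 0`. -/
def ConvergesUniformlyTo (S : (ℤ → ℝ) → (ℤ → ℝ)) (f : ℤ → ℝ) (F : ℝ → ℝ) : Prop :=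
  ∀ ε : ℝ, 0 < ε → ∃ K : ℕ, ∀ k : ℕ, K ≤ k → ∀ j : ℤ,
    |(S^[k] f) j - F ((j : ℝ) / 2 ^ k)| ≤ ε

/-- A subdivision scheme is uniformly convergent if every bounded initial sequence
has a continuous limit function. -/
def UnifConvergent (S : (ℤ → ℝ) → (ℤ → ℝ)) : Prop :=
  ∀ f : ℤ → ℝ, IsBoundedSeq f → ∃ F : ℝ → ℝ, Continuous F ∧ ConvergesUniformlyTo S f F



namespace Stmt2Aux

lemma supp_fin {b : ℤ → ℝ} (hb : (Function.support b).Finite) {e : ℤ → ℤ}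
    (he : Function.Injective e) (F : ℤ → ℝ) (hF : ∀ l, b (e l) = 0 → F l = 0) :
    (Function.support F).Finite := by
  apply Set.Finite.subset (hb.preimage he.injOn)
  intro l hl
  exact fun h0 => hl (hF l h0)

lemma abs_finsum_le {x y : ℤ → ℝ} (hy : (Function.support y).Finite)
    (h : ∀ l, |x l| ≤ y l) : |∑ᶠ l, x l| ≤ ∑ᶠ l, y l := by
  have hx : Function.support x ⊆ Function.support y := by
    intro l hl
    simp only [Function.mem_support] at hl ⊢
    intro h0
    have h1 := h l
    rw [h0] at h1
    exact hl (abs_eq_zero.mp (le_antisymm h1 (abs_nonneg _)))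
  rw [finsum_eq_sum_of_support_subset x (s := hy.toFinset) (by simpa using hx),
      finsum_eq_sum_of_support_subset y (s := hy.toFinset) (by simp)]
  calc |∑ l ∈ hy.toFinset, x l| ≤ ∑ l ∈ hy.toFinset, |x l| := Finset.abs_sum_le_sum_abs _ _
    _ ≤ ∑ l ∈ hy.toFinset, y l := Finset.sum_le_sum fun l _ => h l

lemma finsum_shift (g : ℤ → ℝ) (c : ℤ) : ∑ᶠ l, g (l + c) = ∑ᶠ l, g l :=
  finsum_comp_equiv (Equiv.addRight c)

lemma telescope {g : ℤ → ℝ} {L : ℝ} (hL : 0 ≤ L) (hg : ∀ j, |g (j + 1) - g j| ≤ L) :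
    ∀ (j l : ℤ), |g (j + l) - g j| ≤ |(l : ℝ)| * L := by
  intro j l
  induction l using Int.induction_on with
  | zero => simp
  | succ i ih =>
    have e : j + ((i : ℤ) + 1) = (j + i) + 1 := by ring
    rw [e]
    have h1 := hg (j + i)
    have h3 := abs_sub_le (g (j + i + 1)) (g (j + i)) (g j)
    have h4 : |(((i : ℤ) + 1 : ℤ) : ℝ)| = (i : ℝ) + 1 := by
      push_cast; rw [abs_of_nonneg]; positivity
    have h5 : |(((i : ℤ)) : ℝ)| = (i : ℝ) := by
      push_cast; rw [abs_of_nonneg]; positivity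
    rw [h4]; rw [h5] at ih
    nlinarith
  | pred i ih =>
    have e : j + (-(i : ℤ) - 1) = (j + -(i : ℤ)) - 1 := by ring
    rw [e]
    have h1 := hg (j + -(i : ℤ) - 1)
    have e2 : j + -(i : ℤ) - 1 + 1 = j + -(i : ℤ) := by ring
    rw [e2] at h1
    rw [abs_sub_comm] at h1
    have h3 := abs_sub_le (g (j + -(i : ℤ) - 1)) (g (j + -(i : ℤ))) (g j)
    have h4 : |((-(i : ℤ) - 1 : ℤ) : ℝ)| = (i : ℝ) + 1 := by
      push_cast
      rw [show -(i : ℝ) - 1 = -((i : ℝ) + 1) by ring, abs_neg, abs_of_nonneg (by positivity)]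
    have h5 : |((-(i : ℤ) : ℤ) : ℝ)| = (i : ℝ) := by
      push_cast
      rw [abs_neg, abs_of_nonneg (by positivity)]
    rw [h4]; rw [h5] at ih
    nlinarith

noncomputable def plin (g : ℤ → ℝ) (y : ℝ) : ℝ :=
  g ⌊y⌋ + Int.fract y * (g (⌊y⌋ + 1) - g ⌊y⌋)

lemma plin_intCast (g : ℤ → ℝ) (j : ℤ) : plin g (j : ℝ) = g j := by
  simp [plin, Int.fract_intCast, Int.floor_intCast]

lemma plin_lip {g : ℤ → ℝ} {L : ℝ} (hL : 0 ≤ L) (hg : ∀ j, |g (j + 1) - g j| ≤ L) :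
    ∀ x y : ℝ, x ≤ y → |plin g y - plin g x| ≤ L * (y - x) := by
  have main : ∀ n : ℕ, ∀ x y : ℝ, x ≤ y → ⌊y⌋ - ⌊x⌋ ≤ n → |plin g y - plin g x| ≤ L * (y - x) := by
    intro n
    induction n with
    | zero =>
      intro x y hxy hfl
      have h1 : ⌊x⌋ ≤ ⌊y⌋ := Int.floor_le_floor hxy
      have h2 : ⌊y⌋ = ⌊x⌋ := by omega
      have h3 : plin g y - plin g x = (y - x) * (g (⌊x⌋ + 1) - g ⌊x⌋) := by
        simp only [plin, h2, Int.fract]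
        ring
      rw [h3, abs_mul, abs_of_nonneg (by linarith)]
      have := hg ⌊x⌋
      nlinarith
    | succ n ih =>
      intro x y hxy hfl
      by_cases hc : ⌊y⌋ - ⌊x⌋ ≤ n
      · exact ih x y hxy hc
      · have hge : ⌊x⌋ + 1 ≤ ⌊y⌋ := by omega
        set z : ℝ := ((⌊x⌋ + 1 : ℤ) : ℝ) with hz
        have hxz : x ≤ z := by
          have := Int.lt_floor_add_one x
          rw [hz]; push_cast; linarith
        have hzy : z ≤ y := by
          have h1 : ((⌊x⌋ + 1 : ℤ) : ℝ) ≤ (⌊y⌋ : ℝ) := by exact_mod_cast hge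
          have h2 := Int.floor_le y
          linarith
        have hfz : ⌊z⌋ = ⌊x⌋ + 1 := by rw [hz]; exact Int.floor_intCast _
        have hy1 : |plin g y - plin g z| ≤ L * (y - z) := by
          apply ih z y hzy
          omega
        have hy2 : |plin g z - plin g x| ≤ L * (z - x) := by
          have hpz : plin g z = g (⌊x⌋ + 1) := by rw [hz]; exact plin_intCast g _
          have hfr : Int.fract x = x - (⌊x⌋ : ℝ) := Int.self_sub_floor x ▸ rfl
          have h3 : plin g z - plin g x = (z - x) * (g (⌊x⌋ + 1) - g ⌊x⌋) := by
            rw [hpz]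
            simp only [plin, hfr, hz]
            push_cast
            ring
          rw [h3, abs_mul, abs_of_nonneg (by linarith)]
          have := hg ⌊x⌋
          nlinarith
        calc |plin g y - plin g x| ≤ |plin g y - plin g z| + |plin g z - plin g x| :=
              abs_sub_le _ _ _
          _ ≤ L * (y - z) + L * (z - x) := add_le_add hy1 hy2
          _ = L * (y - x) := by ring
  intro x y hxy
  exact main (⌊y⌋ - ⌊x⌋).toNat x y hxy (by omega)

lemma plin_cont {g : ℤ → ℝ} {L : ℝ} (hL : 0 ≤ L) (hg : ∀ j, |g (j + 1) - g j| ≤ L) :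
    Continuous (plin g) := by
  have key : ∀ x y : ℝ, dist (plin g x) (plin g y) ≤ L.toNNReal * dist x y := by
    intro x y
    rw [Real.dist_eq, Real.dist_eq, Real.coe_toNNReal L hL]
    rcases le_total x y with h | h
    · rw [abs_sub_comm (plin g x), abs_sub_comm x]
      rw [abs_of_nonneg (by linarith : (0:ℝ) ≤ y - x)]
      exact plin_lip hL hg x y h
    · rw [abs_of_nonneg (by linarith : (0:ℝ) ≤ x - y)]
      exact plin_lip hL hg y x h
  exact (LipschitzWith.of_dist_le_mul key).continuous

end Stmt2Aux

namespace Stmt2Aux2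
open Stmt2Aux Function

lemma injE (c : ℤ) : Function.Injective (fun l : ℤ => 2 * l - c) := by
  intro x y h; simp only at h; omega

lemma injE0 : Function.Injective (fun l : ℤ => 2 * l) := by
  intro x y h; simp only at h; omega

lemma subOp_eq (a g : ℤ → ℝ) (i j : ℤ) :
    subOp a g (2 * j + i) = ∑ᶠ l, a (2 * l - i) * g (l + j) := by
  rw [subOp, ← finsum_shift (fun l => a (2 * l - (2 * j + i)) * g l) j]
  apply finsum_congr; intro l
  show a (2 * (l + j) - (2 * j + i)) * g (l + j) = a (2 * l - i) * g (l + j)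
  have e : 2 * (l + j) - (2 * j + i) = 2 * l - i := by ring
  rw [e]

noncomputable def C1 (a : ℤ → ℝ) : ℝ := ∑ᶠ l : ℤ, |a (2 * l)| * |(l : ℝ)|
noncomputable def C2 (a : ℤ → ℝ) : ℝ :=
  ∑ᶠ l : ℤ, |a (2 * l - 1)| * ((|(l : ℝ)| + |(l : ℝ) - 1|) / 2)

lemma C1_nonneg (a : ℤ → ℝ) : 0 ≤ C1 a := finsum_nonneg fun l => by positivity

lemma est_even {a : ℤ → ℝ} (ha : (Function.support a).Finite)
    (hsum0 : (∑ᶠ j : ℤ, a (2 * j)) = 1) {g : ℤ → ℝ} {dk : ℝ} (hdk : 0 ≤ dk)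
    (hg : ∀ j, |g (j + 1) - g j| ≤ dk) (j : ℤ) :
    |subOp a g (2 * j) - g j| ≤ C1 a * dk := by
  have h0 : subOp a g (2 * j) = ∑ᶠ l, a (2 * l) * g (l + j) := by
    have h := subOp_eq a g 0 j
    simpa using h
  have hfinA : (Function.support fun l : ℤ => a (2 * l)).Finite :=
    supp_fin ha injE0 _ (fun l h0 => h0)
  have hfin1 : (Function.support fun l : ℤ => a (2 * l) * g (l + j)).Finite :=
    supp_fin ha injE0 _ (fun l h0 => by simp [h0])
  have hfin2 : (Function.support fun l : ℤ => a (2 * l) * g j).Finite :=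
    supp_fin ha injE0 _ (fun l h0 => by simp [h0])
  have hfin3 : (Function.support fun l : ℤ => a (2 * l) * (g (l + j) - g j)).Finite :=
    supp_fin ha injE0 _ (fun l h0 => by simp [h0])
  have hfin4 : (Function.support fun l : ℤ => |a (2 * l)| * |(l : ℝ)|).Finite :=
    supp_fin ha injE0 _ (fun l h0 => by simp [h0])
  have hfin5 : (Function.support fun l : ℤ => |a (2 * l)| * |(l : ℝ)| * dk).Finite :=
    supp_fin ha injE0 _ (fun l h0 => by simp [h0])
  have hgj : (∑ᶠ l : ℤ, a (2 * l) * g j) = g j := by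
    rw [← finsum_mul _ _, hsum0, one_mul]
  have hdiff2 : (∑ᶠ l, a (2 * l) * (g (l + j) - g j))
      = (∑ᶠ l, a (2 * l) * g (l + j)) - ∑ᶠ l : ℤ, a (2 * l) * g j := by
    rw [← finsum_sub_distrib hfin1 hfin2]
    apply finsum_congr; intro l; ring
  have hdiff : subOp a g (2 * j) - g j = ∑ᶠ l, a (2 * l) * (g (l + j) - g j) := by
    rw [h0, hdiff2, hgj]
  rw [hdiff]
  calc |∑ᶠ l, a (2 * l) * (g (l + j) - g j)|
      ≤ ∑ᶠ l : ℤ, |a (2 * l)| * |(l : ℝ)| * dk := by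
        apply abs_finsum_le hfin5
        intro l
        rw [abs_mul, mul_assoc]
        apply mul_le_mul_of_nonneg_left _ (abs_nonneg _)
        have ht := telescope hdk hg j l
        rw [add_comm j l] at ht
        exact ht
    _ = C1 a * dk := by rw [C1, finsum_mul _ _]

lemma sum_odd {a : ℤ → ℝ} (hsum1 : (∑ᶠ j : ℤ, a (2 * j + 1)) = 1) :
    (∑ᶠ l : ℤ, a (2 * l - 1)) = 1 := by
  rw [← finsum_shift (fun l => a (2 * l - 1)) 1, ← hsum1]
  apply finsum_congr; intro l
  show a (2 * (l + 1) - 1) = a (2 * l + 1)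
  have e : 2 * (l + 1) - 1 = 2 * l + 1 := by ring
  rw [e]

lemma est_odd {a : ℤ → ℝ} (ha : (Function.support a).Finite)
    (hsum1 : (∑ᶠ j : ℤ, a (2 * j + 1)) = 1) {g : ℤ → ℝ} {dk : ℝ} (hdk : 0 ≤ dk)
    (hg : ∀ j, |g (j + 1) - g j| ≤ dk) (j : ℤ) :
    |subOp a g (2 * j + 1) - (g j + g (j + 1)) / 2| ≤ C2 a * dk := by
  have h0 : subOp a g (2 * j + 1) = ∑ᶠ l, a (2 * l - 1) * g (l + j) := subOp_eq a g 1 j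
  have hfinA : (Function.support fun l : ℤ => a (2 * l - 1)).Finite :=
    supp_fin ha (injE 1) _ (fun l h0 => h0)
  have hfin1 : (Function.support fun l : ℤ => a (2 * l - 1) * g (l + j)).Finite :=
    supp_fin ha (injE 1) _ (fun l h0 => by simp [h0])
  have hfin2 : (Function.support fun l : ℤ => a (2 * l - 1) * ((g j + g (j + 1)) / 2)).Finite :=
    supp_fin ha (injE 1) _ (fun l h0 => by simp [h0])
  have hfin3 : (Function.support fun l : ℤ =>
      |a (2 * l - 1)| * ((|(l : ℝ)| + |(l : ℝ) - 1|) / 2)).Finite :=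
    supp_fin ha (injE 1) _ (fun l h0 => by simp [h0])
  have hfin5 : (Function.support fun l : ℤ =>
      |a (2 * l - 1)| * ((|(l : ℝ)| + |(l : ℝ) - 1|) / 2) * dk).Finite :=
    supp_fin ha (injE 1) _ (fun l h0 => by simp [h0])
  have hgj : (∑ᶠ l : ℤ, a (2 * l - 1) * ((g j + g (j + 1)) / 2)) = (g j + g (j + 1)) / 2 := by
    rw [← finsum_mul _ _, sum_odd hsum1, one_mul]
  have hdiff2 : (∑ᶠ l, a (2 * l - 1) * (g (l + j) - (g j + g (j + 1)) / 2))
      = (∑ᶠ l, a (2 * l - 1) * g (l + j))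
        - ∑ᶠ l : ℤ, a (2 * l - 1) * ((g j + g (j + 1)) / 2) := by
    rw [← finsum_sub_distrib hfin1 hfin2]
    apply finsum_congr; intro l; ring
  have hdiff : subOp a g (2 * j + 1) - (g j + g (j + 1)) / 2
      = ∑ᶠ l, a (2 * l - 1) * (g (l + j) - (g j + g (j + 1)) / 2) := by
    rw [h0, hdiff2, hgj]
  rw [hdiff]
  calc |∑ᶠ l, a (2 * l - 1) * (g (l + j) - (g j + g (j + 1)) / 2)|
      ≤ ∑ᶠ l : ℤ, |a (2 * l - 1)| * ((|(l : ℝ)| + |(l : ℝ) - 1|) / 2) * dk := by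
        apply abs_finsum_le hfin5
        intro l
        rw [abs_mul, mul_assoc]
        apply mul_le_mul_of_nonneg_left _ (abs_nonneg _)
        have ht1 := telescope hdk hg j l
        rw [add_comm j l] at ht1
        have ht2 := telescope hdk hg (j + 1) (l - 1)
        have e : j + 1 + (l - 1) = l + j := by ring
        rw [e] at ht2
        have e2 : g (l + j) - (g j + g (j + 1)) / 2
            = ((g (l + j) - g j) + (g (l + j) - g (j + 1))) / 2 := by ring
        rw [e2]
        have hc : ((l - 1 : ℤ) : ℝ) = (l : ℝ) - 1 := by push_cast; ring
        rw [hc] at ht2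
        calc |((g (l + j) - g j) + (g (l + j) - g (j + 1))) / 2|
            = |(g (l + j) - g j) + (g (l + j) - g (j + 1))| / 2 := by
              rw [abs_div]; norm_num
          _ ≤ (|g (l + j) - g j| + |g (l + j) - g (j + 1)|) / 2 := by
              linarith [abs_add_le (g (l + j) - g j) (g (l + j) - g (j + 1))]
          _ ≤ (|(l : ℝ)| + |(l : ℝ) - 1|) / 2 * dk := by linarith
    _ = C2 a * dk := by rw [C2, finsum_mul _ _]

end Stmt2Aux2

namespace Stmt2Aux2
open Stmt2Aux Function

lemma dstep {a q : ℤ → ℝ} (ha : (Function.support a).Finite)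
    (hq : (Function.support q).Finite) (hfac : ∀ j : ℤ, a j = q j + q (j + 1))
    (g : ℤ → ℝ) (m : ℤ) :
    subOp a g (m + 1) - subOp a g m = ∑ᶠ l, q (2 * l - m + 1) * (g (l + 1) - g l) := by
  have hA1 : (Function.support fun l : ℤ => a (2 * l - (m + 1)) * g l).Finite :=
    supp_fin ha (injE (m + 1)) _ (fun l h0 => by simp [h0])
  have hA2 : (Function.support fun l : ℤ => a (2 * l - m) * g l).Finite :=
    supp_fin ha (injE m) _ (fun l h0 => by simp [h0])
  have hQ1 : (Function.support fun l : ℤ => q (2 * l - m - 1) * g l).Finite :=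
    supp_fin hq (injE (m + 1)) _ (fun l h0 => by
      have e : 2 * l - (m + 1) = 2 * l - m - 1 := by ring
      rw [e] at h0; simp [h0])
  have hQ2 : (Function.support fun l : ℤ => q (2 * l - m + 1) * g l).Finite :=
    supp_fin hq (injE (m - 1)) _ (fun l h0 => by
      have e : 2 * l - (m - 1) = 2 * l - m + 1 := by ring
      rw [e] at h0; simp [h0])
  have hQ3 : (Function.support fun l : ℤ => q (2 * l - m + 1) * g (l + 1)).Finite :=
    supp_fin hq (injE (m - 1)) _ (fun l h0 => by
      have e : 2 * l - (m - 1) = 2 * l - m + 1 := by ring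
      rw [e] at h0; simp [h0])
  have stepA : subOp a g (m + 1) - subOp a g m
      = (∑ᶠ l, q (2 * l - m - 1) * g l) - ∑ᶠ l, q (2 * l - m + 1) * g l := by
    rw [subOp, subOp, ← finsum_sub_distrib hA1 hA2, ← finsum_sub_distrib hQ1 hQ2]
    apply finsum_congr; intro l
    rw [hfac (2 * l - (m + 1)), hfac (2 * l - m)]
    have e1 : 2 * l - (m + 1) = 2 * l - m - 1 := by ring
    rw [e1]
    have e2 : 2 * l - m - 1 + 1 = 2 * l - m := by ring
    rw [e2]
    ring
  have stepB : (∑ᶠ l, q (2 * l - m - 1) * g l) = ∑ᶠ l, q (2 * l - m + 1) * g (l + 1) := by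
    rw [← finsum_shift (fun l => q (2 * l - m - 1) * g l) 1]
    apply finsum_congr; intro l
    show q (2 * (l + 1) - m - 1) * g (l + 1) = q (2 * l - m + 1) * g (l + 1)
    have e : 2 * (l + 1) - m - 1 = 2 * l - m + 1 := by ring
    rw [e]
  rw [stepA, stepB, ← finsum_sub_distrib hQ3 hQ2]
  apply finsum_congr; intro l
  ring

lemma qsum_parity {q : ℤ → ℝ} (hq : (Function.support q).Finite) (m : ℤ) :
    (∑ᶠ l : ℤ, |q (2 * l - m + 1)|)
      ≤ max (∑ᶠ j : ℤ, |q (2 * j)|) (∑ᶠ j : ℤ, |q (2 * j - 1)|) := by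
  rcases Int.even_or_odd m with ⟨t, ht⟩ | ⟨t, ht⟩
  · have h : (∑ᶠ l : ℤ, |q (2 * l - m + 1)|) = ∑ᶠ j : ℤ, |q (2 * j - 1)| := by
      rw [← finsum_shift (fun j => |q (2 * j - 1)|) (1 - t)]
      apply finsum_congr; intro l
      show |q (2 * l - m + 1)| = |q (2 * (l + (1 - t)) - 1)|
      have e : 2 * l - m + 1 = 2 * (l + (1 - t)) - 1 := by omega
      rw [e]
    rw [h]; exact le_max_right _ _
  · have h : (∑ᶠ l : ℤ, |q (2 * l - m + 1)|) = ∑ᶠ j : ℤ, |q (2 * j)| := by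
      rw [← finsum_shift (fun j => |q (2 * j)|) (-t)]
      apply finsum_congr; intro l
      show |q (2 * l - m + 1)| = |q (2 * (l + -t))|
      have e : 2 * l - m + 1 = 2 * (l + -t) := by omega
      rw [e]
    rw [h]; exact le_max_left _ _

lemma dbound {q : ℤ → ℝ} (hq : (Function.support q).Finite) (m : ℤ) {h : ℤ → ℝ} {dk : ℝ}
    (hdk : 0 ≤ dk) (hh : ∀ l, |h l| ≤ dk) :
    |∑ᶠ l, q (2 * l - m + 1) * h l|
      ≤ max (∑ᶠ j : ℤ, |q (2 * j)|) (∑ᶠ j : ℤ, |q (2 * j - 1)|) * dk := by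
  have hfin : (Function.support fun l : ℤ => |q (2 * l - m + 1)|).Finite :=
    supp_fin hq (injE (m - 1)) _ (fun l h0 => by
      have e : 2 * l - (m - 1) = 2 * l - m + 1 := by ring
      rw [e] at h0; simp [h0])
  have hfin2 : (Function.support fun l : ℤ => |q (2 * l - m + 1)| * dk).Finite :=
    supp_fin hq (injE (m - 1)) _ (fun l h0 => by
      have e : 2 * l - (m - 1) = 2 * l - m + 1 := by ring
      rw [e] at h0; simp [h0])
  calc |∑ᶠ l, q (2 * l - m + 1) * h l| ≤ ∑ᶠ l : ℤ, |q (2 * l - m + 1)| * dk := by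
        apply abs_finsum_le hfin2
        intro l
        rw [abs_mul]
        exact mul_le_mul_of_nonneg_left (hh l) (abs_nonneg _)
    _ = (∑ᶠ l : ℤ, |q (2 * l - m + 1)|) * dk := (finsum_mul _ _).symm
    _ ≤ _ := mul_le_mul_of_nonneg_right (qsum_parity hq m) hdk

lemma key {a : ℤ → ℝ} (ha : (Function.support a).Finite)
    (hsum0 : (∑ᶠ j : ℤ, a (2 * j)) = 1) (hsum1 : (∑ᶠ j : ℤ, a (2 * j + 1)) = 1)
    {g : ℤ → ℝ} {dk : ℝ} (hdk : 0 ≤ dk) (hg : ∀ j, |g (j + 1) - g j| ≤ dk) (y : ℝ) :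
    |plin (subOp a g) y - plin g (y / 2)| ≤ (max (C1 a) (C2 a) + 1) * dk := by
  set i := ⌊y⌋ with hi
  set m := ⌊y / 2⌋ with hm
  have h1 : (m : ℝ) ≤ y / 2 := Int.floor_le _
  have h2 : y / 2 < m + 1 := Int.lt_floor_add_one _
  have hilb : 2 * m ≤ i := by
    rw [hi]; apply Int.le_floor.mpr; push_cast; linarith
  have hiub : i < 2 * m + 2 := by
    rw [hi]; apply Int.floor_lt.mpr; push_cast; linarith
  set s := Int.fract (y / 2) with hs
  have hs0 : 0 ≤ s := Int.fract_nonneg _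
  have hs1 : s ≤ 1 := le_of_lt (Int.fract_lt_one _)
  have hPeq : plin g (y / 2) = g m + s * (g (m + 1) - g m) := rfl
  set P := g m + s * (g (m + 1) - g m) with hP
  have hd := hg m
  have hPm : |P - g m| ≤ dk := by
    have e : P - g m = s * (g (m + 1) - g m) := by rw [hP]; ring
    rw [e, abs_mul, abs_of_nonneg hs0]
    nlinarith
  have hPm1 : |P - g (m + 1)| ≤ dk := by
    have e : P - g (m + 1) = (s - 1) * (g (m + 1) - g m) := by rw [hP]; ring
    rw [e, abs_mul, abs_of_nonpos (by linarith : s - 1 ≤ 0)]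
    nlinarith
  have hPmid : |P - (g m + g (m + 1)) / 2| ≤ dk := by
    have e : P - (g m + g (m + 1)) / 2 = (s - 1 / 2) * (g (m + 1) - g m) := by rw [hP]; ring
    have habs : |s - 1 / 2| ≤ 1 := abs_le.mpr ⟨by linarith, by linarith⟩
    rw [e, abs_mul]
    nlinarith [abs_nonneg (s - 1 / 2), abs_nonneg (g (m + 1) - g m)]
  set B := max (C1 a) (C2 a) * dk + dk with hB
  have hE : ∀ i' : ℤ, 2 * m ≤ i' → i' ≤ 2 * m + 2 → |subOp a g i' - P| ≤ B := by
    intro i' hl hu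
    have hmax1 : C1 a * dk ≤ max (C1 a) (C2 a) * dk :=
      mul_le_mul_of_nonneg_right (le_max_left _ _) hdk
    have hmax2 : C2 a * dk ≤ max (C1 a) (C2 a) * dk :=
      mul_le_mul_of_nonneg_right (le_max_right _ _) hdk
    have hcase : i' = 2 * m ∨ i' = 2 * m + 1 ∨ i' = 2 * (m + 1) := by omega
    rcases hcase with h | h | h
    · rw [h, hB]
      calc |subOp a g (2 * m) - P| ≤ |subOp a g (2 * m) - g m| + |g m - P| := abs_sub_le _ _ _
        _ ≤ C1 a * dk + dk := add_le_add (est_even ha hsum0 hdk hg m) (by rwa [abs_sub_comm])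
        _ ≤ max (C1 a) (C2 a) * dk + dk := by linarith
    · rw [h, hB]
      calc |subOp a g (2 * m + 1) - P|
          ≤ |subOp a g (2 * m + 1) - (g m + g (m + 1)) / 2| + |(g m + g (m + 1)) / 2 - P| :=
            abs_sub_le _ _ _
        _ ≤ C2 a * dk + dk := add_le_add (est_odd ha hsum1 hdk hg m) (by rwa [abs_sub_comm])
        _ ≤ max (C1 a) (C2 a) * dk + dk := by linarith
    · rw [h, hB]
      calc |subOp a g (2 * (m + 1)) - P|
          ≤ |subOp a g (2 * (m + 1)) - g (m + 1)| + |g (m + 1) - P| := abs_sub_le _ _ _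
        _ ≤ C1 a * dk + dk := add_le_add (est_even ha hsum0 hdk hg (m + 1)) (by rwa [abs_sub_comm])
        _ ≤ max (C1 a) (C2 a) * dk + dk := by linarith
  set t := Int.fract y with ht
  have ht0 : 0 ≤ t := Int.fract_nonneg _
  have ht1 : t ≤ 1 := le_of_lt (Int.fract_lt_one _)
  have hpleq : plin (subOp a g) y = subOp a g i + t * (subOp a g (i + 1) - subOp a g i) := rfl
  have hdecomp : plin (subOp a g) y - plin g (y / 2)
      = (1 - t) * (subOp a g i - P) + t * (subOp a g (i + 1) - P) := by
    rw [hpleq, hPeq]; ring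
  rw [hdecomp]
  have b1 := hE i hilb (by omega)
  have b2 := hE (i + 1) (by omega) (by omega)
  have hBnn : 0 ≤ B := le_trans (abs_nonneg _) b1
  calc |(1 - t) * (subOp a g i - P) + t * (subOp a g (i + 1) - P)|
      ≤ |(1 - t) * (subOp a g i - P)| + |t * (subOp a g (i + 1) - P)| := abs_add_le _ _
    _ = (1 - t) * |subOp a g i - P| + t * |subOp a g (i + 1) - P| := by
        rw [abs_mul, abs_mul, abs_of_nonneg (by linarith : (0:ℝ) ≤ 1 - t), abs_of_nonneg ht0]
    _ ≤ (1 - t) * B + t * B :=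
        add_le_add (mul_le_mul_of_nonneg_left b1 (by linarith)) (mul_le_mul_of_nonneg_left b2 ht0)
    _ = B := by ring
    _ = (max (C1 a) (C2 a) + 1) * dk := by rw [hB]; ring

end Stmt2Aux2


open Stmt2Aux Stmt2Aux2

/-- if `a` is a finitely supported mask reproducing constants
(`∑ a_{2j} = ∑ a_{2j+1} = 1`), `q` is the finitely supported difference mask
(`a(z) = (1+z) q(z)`, i.e. `a j = q j + q (j+1)`), and
`max(∑ |q_{2j}|, ∑ |q_{2j−1}|) < 1`, then `S_a` is uniformly convergent. -/
theorem stmt2 (a q : ℤ → ℝ) (ha : (Function.support a).Finite)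
    (hq : (Function.support q).Finite)
    (hsum0 : (∑ᶠ j : ℤ, a (2 * j)) = 1) (hsum1 : (∑ᶠ j : ℤ, a (2 * j + 1)) = 1)
    (hfac : ∀ j : ℤ, a j = q j + q (j + 1))
    (hnorm : max (∑ᶠ j : ℤ, |q (2 * j)|) (∑ᶠ j : ℤ, |q (2 * j - 1)|) < 1) :
    UnifConvergent (subOp a) := by
  classical
  intro f hf
  obtain ⟨M0, hM0⟩ := hf
  set μ := max (∑ᶠ j : ℤ, |q (2 * j)|) (∑ᶠ j : ℤ, |q (2 * j - 1)|) with hμdef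
  have hμ1 : μ < 1 := hnorm
  have hμ0 : 0 ≤ μ := by
    rw [hμdef]
    exact le_trans (finsum_nonneg fun j => abs_nonneg _) (le_max_left _ _)
  set D := 2 * |M0| + 1 with hD
  have hD0 : 0 ≤ D := by rw [hD]; positivity
  set fk : ℕ → ℤ → ℝ := fun k => (subOp a)^[k] f with hfk
  have hfks : ∀ k, fk (k + 1) = subOp a (fk k) := fun k => Function.iterate_succ_apply' _ _ _
  have hΔ : ∀ k, ∀ j : ℤ, |fk k (j + 1) - fk k j| ≤ D * μ ^ k := by
    intro k
    induction k with
    | zero =>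
      intro j
      show |f (j + 1) - f j| ≤ D * μ ^ 0
      rw [pow_zero, mul_one, hD]
      have h3 : |f (j + 1) - f j| ≤ |f (j + 1)| + |f j| := by
        calc |f (j + 1) - f j| = |f (j + 1) + -(f j)| := by rw [sub_eq_add_neg]
          _ ≤ |f (j + 1)| + |-(f j)| := abs_add_le _ _
          _ = |f (j + 1)| + |f j| := by rw [abs_neg]
      have h4 : M0 ≤ |M0| := le_abs_self M0
      linarith [hM0 (j + 1), hM0 j]
    | succ k ih =>
      intro j
      rw [hfks k, dstep ha hq hfac (fk k) j]
      have hb := dbound hq j (dk := D * μ ^ k) (mul_nonneg hD0 (pow_nonneg hμ0 k)) ih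
      rw [← hμdef] at hb
      calc |∑ᶠ l, q (2 * l - j + 1) * (fk k (l + 1) - fk k l)| ≤ μ * (D * μ ^ k) := hb
        _ = D * μ ^ (k + 1) := by ring
  set C := max (C1 a) (C2 a) + 1 with hC
  have hC0 : 0 ≤ C := by
    rw [hC]
    have := le_trans (C1_nonneg a) (le_max_left (C1 a) (C2 a))
    linarith
  set c := C * D with hc
  have hc0 : 0 ≤ c := mul_nonneg hC0 hD0
  set Fk : ℕ → ℝ → ℝ := fun k x => plin (fk k) (2 ^ k * x) with hFkdef
  have hFcont : ∀ k, Continuous (Fk k) := by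
    intro k
    have h := plin_cont (g := fk k) (L := D * μ ^ k)
      (mul_nonneg hD0 (pow_nonneg hμ0 k)) (hΔ k)
    exact h.comp (continuous_const.mul continuous_id)
  have hstep : ∀ (k : ℕ) (x : ℝ), |Fk (k + 1) x - Fk k x| ≤ c * μ ^ k := by
    intro k x
    have hk := key ha hsum0 hsum1 (g := fk k) (dk := D * μ ^ k)
      (mul_nonneg hD0 (pow_nonneg hμ0 k)) (hΔ k) (2 ^ (k + 1) * x)
    have hy : (2 : ℝ) ^ (k + 1) * x / 2 = 2 ^ k * x := by ring
    rw [hy] at hk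
    have e1 : Fk (k + 1) x = plin (subOp a (fk k)) (2 ^ (k + 1) * x) := by
      show plin (fk (k + 1)) (2 ^ (k + 1) * x) = _
      rw [hfks k]
    have e2 : Fk k x = plin (fk k) (2 ^ k * x) := rfl
    rw [e1, e2]
    calc |plin (subOp a (fk k)) (2 ^ (k + 1) * x) - plin (fk k) (2 ^ k * x)|
        ≤ (max (C1 a) (C2 a) + 1) * (D * μ ^ k) := hk
      _ = c * μ ^ k := by rw [hc, hC]; ring
  have hcauchy : ∀ x : ℝ, ∃ L : ℝ, Filter.Tendsto (fun k => Fk k x) Filter.atTop (nhds L) := by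
    intro x
    apply cauchySeq_tendsto_of_complete
    apply cauchySeq_of_le_geometric μ c hμ1
    intro n
    rw [Real.dist_eq, abs_sub_comm]
    exact hstep n x
  choose F hF using hcauchy
  have hgeo : ∀ n : ℕ, (∑ i ∈ Finset.range n, μ ^ i) ≤ (1 - μ)⁻¹ := by
    intro n
    have h1μ : 0 < 1 - μ := by linarith
    have h1 : (∑ i ∈ Finset.range n, μ ^ i) * (1 - μ) = 1 - μ ^ n := by
      linear_combination (-1 : ℝ) * geom_sum_mul μ n
    have hμn : 0 ≤ μ ^ n := pow_nonneg hμ0 n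
    rw [inv_eq_one_div, le_div_iff₀ h1μ, h1]
    linarith
  have htail : ∀ (k n : ℕ) (x : ℝ),
      |Fk (k + n) x - Fk k x| ≤ c * μ ^ k * (∑ i ∈ Finset.range n, μ ^ i) := by
    intro k n x
    induction n with
    | zero => simp
    | succ n ih =>
      calc |Fk (k + (n + 1)) x - Fk k x|
          ≤ |Fk ((k + n) + 1) x - Fk (k + n) x| + |Fk (k + n) x - Fk k x| := by
            rw [show k + (n + 1) = (k + n) + 1 from rfl]
            exact abs_sub_le _ _ _
        _ ≤ c * μ ^ (k + n) + c * μ ^ k * (∑ i ∈ Finset.range n, μ ^ i) :=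
            add_le_add (hstep (k + n) x) ih
        _ = c * μ ^ k * (∑ i ∈ Finset.range (n + 1), μ ^ i) := by
            rw [Finset.sum_range_succ, pow_add]; ring
  have hclose : ∀ (k : ℕ) (x : ℝ), |Fk k x - F x| ≤ c * μ ^ k * (1 - μ)⁻¹ := by
    intro k x
    have hb : ∀ k', k ≤ k' → |Fk k' x - Fk k x| ≤ c * μ ^ k * (1 - μ)⁻¹ := by
      intro k' hk'
      obtain ⟨n, rfl⟩ := Nat.exists_eq_add_of_le hk'
      exact le_trans (htail k n x)
        (mul_le_mul_of_nonneg_left (hgeo n) (mul_nonneg hc0 (pow_nonneg hμ0 k)))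
    have hlim : Filter.Tendsto (fun k' => |Fk k' x - Fk k x|) Filter.atTop
        (nhds (|F x - Fk k x|)) := ((hF x).sub tendsto_const_nhds).abs
    have h2 := le_of_tendsto hlim (Filter.eventually_atTop.mpr ⟨k, hb⟩)
    rwa [abs_sub_comm] at h2
  have hz : Filter.Tendsto (fun k : ℕ => c * μ ^ k * (1 - μ)⁻¹) Filter.atTop (nhds 0) := by
    have h1 := tendsto_pow_atTop_nhds_zero_of_lt_one hμ0 hμ1
    have h2 := (h1.const_mul c).mul_const ((1 - μ)⁻¹)
    simpa using h2
  refine ⟨F, ?_, ?_⟩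
  · have hTU : TendstoUniformly Fk F Filter.atTop := by
      rw [Metric.tendstoUniformly_iff]
      intro ε hε
      have hev : ∀ᶠ k in Filter.atTop, c * μ ^ k * (1 - μ)⁻¹ < ε := hz.eventually_lt_const hε
      filter_upwards [hev] with k hk x
      rw [Real.dist_eq]
      calc |F x - Fk k x| = |Fk k x - F x| := abs_sub_comm _ _
        _ ≤ c * μ ^ k * (1 - μ)⁻¹ := hclose k x
        _ < ε := hk
    exact hTU.continuous (Filter.Eventually.of_forall hFcont).frequently
  · intro ε hε
    have hev : ∀ᶠ k in Filter.atTop, c * μ ^ k * (1 - μ)⁻¹ < ε := hz.eventually_lt_const hε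
    obtain ⟨K, hK⟩ := Filter.eventually_atTop.mp hev
    refine ⟨K, fun k hk j => ?_⟩
    have e0 : (subOp a)^[k] f j = Fk k ((j : ℝ) / 2 ^ k) := by
      show fk k j = plin (fk k) (2 ^ k * ((j : ℝ) / 2 ^ k))
      have e : (2 : ℝ) ^ k * ((j : ℝ) / 2 ^ k) = (j : ℝ) := by
        field_simp
      rw [e, plin_intCast]
    rw [e0]
    exact le_trans (hclose k ((j : ℝ) / 2 ^ k)) (le_of_lt (hK k hk))
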